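/- Let b_V > 0 and ℓ > 0. There exists a constant C > 0, depending only on b_V and ℓ, such that for every ε ∈ (0,1] the following holds: if u : [−ℓε, ℓε] → ℝ is continuously differentiable on [−ℓε, ℓε], twice continuously differentiable on [−ℓε, 0] and on [0, ℓε], and satisfies (1/2)u''(x) − (b_V/ε) u'(x) = −1 for all x ∈ (0, ℓε), (1/2)u''(x) + (b_V/ε) u'(x) = −1 for all x ∈ (−ℓε, 0), and u(−ℓε) = u(ℓε) = 0, then sup_{x ∈ [−ℓε, ℓε]} |u(x)| ≤ C ε². -/

import Mathlib

open Set

lemma const_of_deriv_zero {f f' : ℝ → ℝ} {a b : ℝ}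
    (hf : ∀ x ∈ Icc a b, HasDerivWithinAt f (f' x) (Icc a b) x)
    (h0 : ∀ x ∈ Ioo a b, f' x = 0) :
    ∀ x ∈ Icc a b, f x = f a := by
  intro x hx
  have ha : a ∈ Icc a b := ⟨le_refl a, hx.1.trans hx.2⟩
  have hcont : ContinuousOn f (Icc a b) := fun y hy => (hf y hy).continuousWithinAt
  have hint : interior (Icc a b) = Ioo a b := interior_Icc
  have hd : ∀ y ∈ interior (Icc a b), HasDerivWithinAt f (f' y) (interior (Icc a b)) y := by
    intro y hy
    exact (hf y (interior_subset hy)).mono interior_subset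
  have hmono : MonotoneOn f (Icc a b) :=
    monotoneOn_of_hasDerivWithinAt_nonneg (convex_Icc a b) hcont hd
      (fun y hy => le_of_eq (h0 y (hint ▸ hy)).symm)
  have hanti : AntitoneOn f (Icc a b) :=
    antitoneOn_of_hasDerivWithinAt_nonpos (convex_Icc a b) hcont hd
      (fun y hy => le_of_eq (h0 y (hint ▸ hy)))
  exact le_antisymm (hanti ha hx hx.1) (hmono ha hx hx.1)

/-- Uniform bound `sup |u| ≤ C ε²` for the solution of the boundary value
problem `(1/2)u'' − (b_V/ε) u' = −1` on `(0, ℓε)`, `(1/2)u'' + (b_V/ε) u' = −1` on `(−ℓε, 0)`,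
`u(±ℓε) = 0`, associated to the worst-case diffusion with inward drift `b_V/ε`.
Here `u'` is the derivative of `u` on `[−ℓε, ℓε]` (assumed continuous there), and
`u''₊`, `u''₋` are the derivatives of `u'` on `[0, ℓε]` and `[−ℓε, 0]` respectively
(assumed continuous on the respective closed intervals). -/
theorem worst_case_exit_time_bound (bV ℓ : ℝ) (hbV : 0 < bV) (hℓ : 0 < ℓ) :
    ∃ C : ℝ, 0 < C ∧ ∀ ε ∈ Set.Ioc (0 : ℝ) 1, ∀ u u' u''p u''m : ℝ → ℝ,
      (∀ x ∈ Icc (-(ℓ * ε)) (ℓ * ε), HasDerivWithinAt u (u' x) (Icc (-(ℓ * ε)) (ℓ * ε)) x) →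
      ContinuousOn u' (Icc (-(ℓ * ε)) (ℓ * ε)) →
      (∀ x ∈ Icc 0 (ℓ * ε), HasDerivWithinAt u' (u''p x) (Icc 0 (ℓ * ε)) x) →
      ContinuousOn u''p (Icc 0 (ℓ * ε)) →
      (∀ x ∈ Icc (-(ℓ * ε)) 0, HasDerivWithinAt u' (u''m x) (Icc (-(ℓ * ε)) 0) x) →
      ContinuousOn u''m (Icc (-(ℓ * ε)) 0) →
      (∀ x ∈ Ioo 0 (ℓ * ε), (1 / 2) * u''p x - (bV / ε) * u' x = -1) →
      (∀ x ∈ Ioo (-(ℓ * ε)) 0, (1 / 2) * u''m x + (bV / ε) * u' x = -1) →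
      u (-(ℓ * ε)) = 0 → u (ℓ * ε) = 0 →
      ∀ x ∈ Icc (-(ℓ * ε)) (ℓ * ε), |u x| ≤ C * ε ^ 2 := by
  refine ⟨ℓ / bV + Real.exp (2 * bV * ℓ) / (2 * bV ^ 2), by positivity, ?_⟩
  rintro ε ⟨hε0, hε1⟩ u u' u''p u''m hu hu'c hup hupc hum humc hODEp hODEm hbm hbp
  have hεne : ε ≠ 0 := ne_of_gt hε0
  have hbne : bV ≠ 0 := ne_of_gt hbV
  set L : ℝ := ℓ * ε with hLdef
  have hL : 0 < L := mul_pos hℓ hε0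
  set k : ℝ := 2 * bV / ε with hkdef
  set c : ℝ := ε / bV with hcdef
  have hk : 0 < k := by positivity
  have hc : 0 < c := by positivity
  have hkc : k * c = 2 := by rw [hkdef, hcdef]; field_simp
  have hkL : k * L = 2 * bV * ℓ := by rw [hkdef, hLdef]; field_simp
  have hcL : c * L = ℓ / bV * ε ^ 2 := by rw [hcdef, hLdef]; field_simp
  have hck : c / k = ε ^ 2 / (2 * bV ^ 2) := by
    rw [hcdef, hkdef]; field_simp
  set A : ℝ := u' 0 - c with hAdef
  set B : ℝ := u' 0 + c with hBdef
  -- Step A: u' x = c + A * exp(k x) on [0, L]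
  have hgA : ∀ x ∈ Icc (0:ℝ) L, u' x = c + A * Real.exp (k * x) := by
    have key : ∀ x ∈ Icc (0:ℝ) L,
        (u' x - c) * Real.exp (-k * x) = (u' 0 - c) * Real.exp (-k * 0) := by
      apply const_of_deriv_zero
        (f' := fun x => u''p x * Real.exp (-k * x) + (u' x - c) * (Real.exp (-k * x) * (-k * 1)))
      · intro x hx
        exact ((hup x hx).sub_const c).mul
          (((((hasDerivAt_id x).const_mul (-k)).exp)).hasDerivWithinAt)
      · intro x hx
        have hode := hODEp x hx
        have h2 : u''p x = k * (u' x - c) := by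
          rw [hkdef, hcdef]; field_simp at hode ⊢; linear_combination hode
        rw [h2]; ring
    intro x hx
    have hkey := key x hx
    simp only [mul_zero, Real.exp_zero, mul_one] at hkey
    have hmul : Real.exp (-k * x) * Real.exp (k * x) = 1 := by
      rw [← Real.exp_add]; norm_num
    have h2 : u' x - c = (u' 0 - c) * Real.exp (k * x) := by
      calc u' x - c = (u' x - c) * (Real.exp (-k * x) * Real.exp (k * x)) := by
            rw [hmul]; ring
        _ = ((u' x - c) * Real.exp (-k * x)) * Real.exp (k * x) := by ring
        _ = (u' 0 - c) * Real.exp (k * x) := by rw [hkey]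
    rw [hAdef]; linarith [h2]
  -- Step B: u x = u 0 + c x + (A/k)(exp(kx) - 1) on [0, L]
  have hIccP : Icc (0:ℝ) L ⊆ Icc (-L) L := Icc_subset_Icc (by linarith) le_rfl
  have huB : ∀ x ∈ Icc (0:ℝ) L,
      u x = u 0 + c * x + A / k * (Real.exp (k * x) - 1) := by
    have key : ∀ x ∈ Icc (0:ℝ) L,
        u x - c * x - A / k * Real.exp (k * x)
          = u 0 - c * 0 - A / k * Real.exp (k * 0) := by
      apply const_of_deriv_zero
        (f' := fun x => u' x - c * 1 - A / k * (Real.exp (k * x) * (k * 1)))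
      · intro x hx
        exact (((hu x (hIccP hx)).mono hIccP).sub
          (((hasDerivAt_id x).const_mul c).hasDerivWithinAt)).sub
          ((((hasDerivAt_id x).const_mul k).exp.const_mul (A / k)).hasDerivWithinAt)
      · intro x hx
        have h1 := hgA x (Ioo_subset_Icc_self hx)
        have hkne : k ≠ 0 := ne_of_gt hk
        rw [h1]; field_simp; ring
    intro x hx
    have := key x hx
    simp only [mul_zero, Real.exp_zero] at this
    linarith [this]
  -- Step A': u' x = -c + B * exp(-k x) on [-L, 0]
  have hgB : ∀ x ∈ Icc (-L) (0:ℝ), u' x = -c + B * Real.exp (-k * x) := by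
    have key : ∀ x ∈ Icc (-L) (0:ℝ),
        (u' x + c) * Real.exp (k * x) = (u' (-L) + c) * Real.exp (k * (-L)) := by
      apply const_of_deriv_zero
        (f' := fun x => u''m x * Real.exp (k * x) + (u' x + c) * (Real.exp (k * x) * (k * 1)))
      · intro x hx
        exact ((hum x hx).add_const c).mul
          ((((hasDerivAt_id x).const_mul k).exp).hasDerivWithinAt)
      · intro x hx
        have hode := hODEm x hx
        have h2 : u''m x = -(k * (u' x + c)) := by
          rw [hkdef, hcdef]; field_simp at hode ⊢; linear_combination hode
        rw [h2]; ring
    have key0 := key 0 ⟨by linarith, le_rfl⟩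
    intro x hx
    have h1 := (key x hx).trans key0.symm
    simp only [mul_zero, Real.exp_zero, mul_one] at h1
    have hmul : Real.exp (k * x) * Real.exp (-k * x) = 1 := by
      rw [← Real.exp_add]; norm_num
    have h2 : u' x + c = (u' 0 + c) * Real.exp (-k * x) := by
      calc u' x + c = (u' x + c) * (Real.exp (k * x) * Real.exp (-k * x)) := by
            rw [hmul]; ring
        _ = ((u' x + c) * Real.exp (k * x)) * Real.exp (-k * x) := by ring
        _ = (u' 0 + c) * Real.exp (-k * x) := by rw [h1]
    rw [hBdef]; linarith [h2]
  -- Step B': u x = u 0 - c x - (B/k)(exp(-kx) - 1) on [-L, 0]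
  have hIccM : Icc (-L) (0:ℝ) ⊆ Icc (-L) L := Icc_subset_Icc le_rfl (by linarith)
  have huB' : ∀ x ∈ Icc (-L) (0:ℝ),
      u x = u 0 - c * x - B / k * (Real.exp (-k * x) - 1) := by
    have key : ∀ x ∈ Icc (-L) (0:ℝ),
        u x + c * x + B / k * Real.exp (-k * x)
          = u (-L) + c * (-L) + B / k * Real.exp (-k * (-L)) := by
      apply const_of_deriv_zero
        (f' := fun x => u' x + c * 1 + B / k * (Real.exp (-k * x) * (-k * 1)))
      · intro x hx
        exact (((hu x (hIccM hx)).mono hIccM).add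
          (((hasDerivAt_id x).const_mul c).hasDerivWithinAt)).add
          ((((hasDerivAt_id x).const_mul (-k)).exp.const_mul (B / k)).hasDerivWithinAt)
      · intro x hx
        have h1 := hgB x (Ioo_subset_Icc_self hx)
        have hkne : k ≠ 0 := ne_of_gt hk
        rw [h1]; field_simp; ring
    have key0 := key 0 ⟨by linarith, le_rfl⟩
    intro x hx
    have h1 := key x hx
    rw [key0.symm] at h1
    simp only [mul_zero, neg_zero, Real.exp_zero, mul_one] at h1
    linarith [h1]
  -- Step D: boundary conditions
  set E : ℝ := Real.exp (k * L) with hEdef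
  have hE1 : 1 < E := by
    rw [hEdef]; exact Real.one_lt_exp_iff.mpr (by positivity)
  have hbdP : 0 = u 0 + c * L + A / k * (E - 1) := by
    have h := huB L ⟨le_of_lt hL, le_rfl⟩
    rw [hbp] at h
    rw [hEdef]; linarith [h]
  have hbdM : 0 = u 0 + c * L - B / k * (E - 1) := by
    have h := huB' (-L) ⟨le_rfl, by linarith⟩
    rw [hbm] at h
    have hee : -k * -L = k * L := by ring
    rw [hee] at h
    rw [hEdef]; linarith [h]
  have hAB : A + B = 0 := by
    have h1 : (A / k + B / k) * (E - 1) = 0 := by linarith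
    have h2 : A / k + B / k = 0 := by
      rcases mul_eq_zero.mp h1 with h | h
      · exact h
      · linarith
    have hkne : k ≠ 0 := ne_of_gt hk
    field_simp at h2
    linarith
  have hu'0 : u' 0 = 0 := by rw [hAdef, hBdef] at hAB; linarith
  have hAval : A = -c := by rw [hAdef, hu'0]; ring
  have hBval : B = c := by rw [hBdef, hu'0]; ring
  have hu0 : u 0 = -(c * L) + c / k * (E - 1) := by
    rw [hAval] at hbdP
    have : -c / k * (E - 1) = -(c / k * (E - 1)) := by ring
    rw [this] at hbdP
    linarith
  -- Step E: final bound
  intro x hx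
  have hckpos : 0 < c / k := by positivity
  have hCe : c * L + c / k * E = (ℓ / bV + Real.exp (2 * bV * ℓ) / (2 * bV ^ 2)) * ε ^ 2 := by
    rw [hcL, hck, hEdef, hkL]; ring
  have h6 : 0 ≤ c / k * E := mul_nonneg hckpos.le (by linarith)
  have h5 : 0 ≤ c * L := mul_nonneg hc.le hL.le
  rcases le_total 0 x with hx0 | hx0
  · have hmem : x ∈ Icc (0:ℝ) L := ⟨hx0, hx.2⟩
    have hform := huB x hmem
    rw [hAval, hu0] at hform
    have hexp1 : 1 ≤ Real.exp (k * x) := Real.one_le_exp (by positivity)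
    have hexpE : Real.exp (k * x) ≤ E := by
      rw [hEdef]
      exact Real.exp_le_exp.mpr (mul_le_mul_of_nonneg_left hmem.2 hk.le)
    have hux : u x = c * (x - L) + c / k * (E - Real.exp (k * x)) := by
      rw [hform]; ring
    have hcx : 0 ≤ c * x := mul_nonneg hc.le hmem.1
    have h1 : -(c * L) ≤ c * (x - L) := by
      have hr : c * (x - L) = c * x - c * L := by ring
      linarith
    have h2 : c * (x - L) ≤ 0 :=
      mul_nonpos_of_nonneg_of_nonpos hc.le (by linarith [hmem.2])
    have h3 : 0 ≤ c / k * (E - Real.exp (k * x)) :=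
      mul_nonneg hckpos.le (by linarith)
    have h4 : c / k * (E - Real.exp (k * x)) ≤ c / k * E :=
      mul_le_mul_of_nonneg_left (by linarith) hckpos.le
    rw [abs_le]
    constructor <;> linarith [hux, hCe]
  · have hmem : x ∈ Icc (-L) (0:ℝ) := ⟨hx.1, hx0⟩
    have hform := huB' x hmem
    rw [hBval, hu0] at hform
    have hexp1 : 1 ≤ Real.exp (-k * x) := by
      apply Real.one_le_exp
      have := mul_nonneg hk.le (neg_nonneg.mpr hmem.2)
      linarith [(by ring : k * (-x) = -k * x)]
    have hexpE : Real.exp (-k * x) ≤ E := by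
      rw [hEdef]
      apply Real.exp_le_exp.mpr
      have := mul_le_mul_of_nonneg_left (neg_le_of_neg_le hmem.1 : -x ≤ L) hk.le
      linarith [(by ring : k * (-x) = -k * x)]
    have hux : u x = c * (-x - L) + c / k * (E - Real.exp (-k * x)) := by
      rw [hform]; ring
    have hcx : 0 ≤ c * (-x) := mul_nonneg hc.le (neg_nonneg.mpr hmem.2)
    have h1 : -(c * L) ≤ c * (-x - L) := by
      have hr : c * (-x - L) = c * (-x) - c * L := by ring
      linarith
    have h2 : c * (-x - L) ≤ 0 :=
      mul_nonpos_of_nonneg_of_nonpos hc.le (by linarith [hmem.1])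
    have h3 : 0 ≤ c / k * (E - Real.exp (-k * x)) :=
      mul_nonneg hckpos.le (by linarith)
    have h4 : c / k * (E - Real.exp (-k * x)) ≤ c / k * E :=
      mul_le_mul_of_nonneg_left (by linarith) hckpos.le
    rw [abs_le]
    constructor <;> linarith [hux, hCe]
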